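/- Let E, F be finite-dimensional real inner product spaces, f : E → ℝ convex and lower semicontinuous, λ > 0, ε > 0, constants L_xx, L_xy, L_yx ≥ 0 and μ_y > 0. Let Φ : E × F → ℝ satisfy ‖∇_xΦ(x,y) − ∇_xΦ(x′,y′)‖ ≤ L_xx‖x−x′‖ + L_xy‖y−y′‖ for all x,x′ ∈ E, y,y′ ∈ F; let y_* : E → F satisfy ‖y_*(x) − y_*(x′)‖ ≤ (L_yx/μ_y)‖x−x′‖ for all x,x′ ∈ E; and let φˢ : E → ℝ be differentiable with ∇φˢ(x) = ∇_xΦ(x, y_*(x)) for every x ∈ E. Suppose x_ε, x̂ ∈ E satisfy x̂ = prox_{λf}(x_ε − λ∇φˢ(x̂)) and ‖x_ε − x̂‖ ≤ λε/2. Then for every x̃ ∈ E: (1/λ)·‖x̃ − prox_{λf}(x̃ − λ∇φˢ(x̃))‖ ≤ (2/λ + L_xx + L_xy·L_yx/μ_y)·‖x̃ − x̂‖ + ε/2. -/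

import Mathlib

open RealInnerProductSpace

lemma prox_var_ineq {E : Type*} [NormedAddCommGroup E] [InnerProductSpace ℝ E]
    (f : E → ℝ) (hf : ConvexOn ℝ Set.univ f) (lam : ℝ) (hlam : 0 < lam)
    (z p : E) (hp : IsMinOn (fun w => f w + 1 / (2 * lam) * ‖w - z‖ ^ 2) Set.univ p)
    (w : E) : lam * f p + ⟪z - p, w - p⟫ ≤ lam * f w := by
  have key : ∀ t : ℝ, 0 < t → t ≤ 1 →
      lam * f p + ⟪z - p, w - p⟫ ≤ lam * f w + t * (‖w - p‖ ^ 2 / 2) := by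
    intro t ht ht1
    have hmin := hp (Set.mem_univ (p + t • (w - p)))
    simp only at hmin
    have hconv : f (p + t • (w - p)) ≤ (1 - t) * f p + t * f w := by
      have h2 := hf.2 (Set.mem_univ p) (Set.mem_univ w)
        (by linarith : (0:ℝ) ≤ 1 - t) ht.le (by ring)
      have heq : (1 - t) • p + t • w = p + t • (w - p) := by
        rw [smul_sub, sub_smul, one_smul]; abel
      rw [heq] at h2
      simpa using h2
    have hnorm : ‖p + t • (w - p) - z‖ ^ 2
        = ‖p - z‖ ^ 2 + 2 * (t * ⟪p - z, w - p⟫) + t ^ 2 * ‖w - p‖ ^ 2 := by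
      have harr : p + t • (w - p) - z = (p - z) + t • (w - p) := by abel
      rw [harr, norm_add_sq_real, real_inner_smul_right, norm_smul,
        Real.norm_eq_abs, mul_pow, sq_abs]
    simp only [Set.mem_setOf_eq] at hmin
    rw [hnorm] at hmin
    have hip : ⟪z - p, w - p⟫ = - ⟪p - z, w - p⟫ := by
      rw [← neg_sub p z, inner_neg_left]
    have hc : 1 / (2 * lam) * lam = 1 / 2 := by field_simp
    have ht' : t * (lam * f p + ⟪z - p, w - p⟫) ≤ t * (lam * f w + t * (‖w - p‖ ^ 2 / 2)) := by
      have hm2 : t * f p ≤ t * f w + 1 / (2 * lam) * (2 * (t * ⟪p - z, w - p⟫) + t ^ 2 * ‖w - p‖ ^ 2) := by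
        nlinarith [hmin, hconv]
      have := mul_le_mul_of_nonneg_right hm2 hlam.le
      nlinarith [this, hc, hip]
    exact le_of_mul_le_mul_left ht' ht
  refine le_of_forall_pos_le_add ?_
  intro δ hδ
  set N : ℝ := ‖w - p‖ ^ 2 / 2 with hN
  have hNnn : 0 ≤ N := by positivity
  have htpos : 0 < min 1 (δ / (N + 1)) := by
    apply lt_min one_pos
    positivity
  have h1 := key (min 1 (δ / (N + 1))) htpos (min_le_left _ _)
  have h2 : min 1 (δ / (N + 1)) * N ≤ δ := by
    have hle : min 1 (δ / (N + 1)) ≤ δ / (N + 1) := min_le_right _ _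
    have : min 1 (δ / (N + 1)) * N ≤ δ / (N + 1) * N :=
      mul_le_mul_of_nonneg_right hle hNnn
    have h3 : δ / (N + 1) * N ≤ δ := by
      rw [div_mul_eq_mul_div, div_le_iff₀ (by linarith)]
      nlinarith
    linarith
  linarith

lemma prox_nonexpansive {E : Type*} [NormedAddCommGroup E] [InnerProductSpace ℝ E]
    (f : E → ℝ) (hf : ConvexOn ℝ Set.univ f) (lam : ℝ) (hlam : 0 < lam)
    (z z' p q : E)
    (hp : IsMinOn (fun w => f w + 1 / (2 * lam) * ‖w - z‖ ^ 2) Set.univ p)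
    (hq : IsMinOn (fun w => f w + 1 / (2 * lam) * ‖w - z'‖ ^ 2) Set.univ q) :
    ‖p - q‖ ≤ ‖z - z'‖ := by
  have h1 := prox_var_ineq f hf lam hlam z p hp q
  have h2 := prox_var_ineq f hf lam hlam z' q hq p
  have hexp : ⟪z - p, q - p⟫ + ⟪z' - q, p - q⟫ = ⟪z - z', q - p⟫ + ‖p - q‖ ^ 2 := by
    rw [← real_inner_self_eq_norm_sq]
    simp only [inner_sub_left, inner_sub_right]
    linarith [real_inner_comm p q]
  have hsq : ‖p - q‖ ^ 2 ≤ ⟪z - z', p - q⟫ := by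
    have hneg : ⟪z - z', q - p⟫ = - ⟪z - z', p - q⟫ := by
      rw [← neg_sub p q, inner_neg_right]
    nlinarith [h1, h2, hexp]
  have hcs := real_inner_le_norm (z - z') (p - q)
  rcases Or.imp Eq.symm id (norm_nonneg (p - q)).eq_or_lt with h0 | h0
  · rw [h0]; exact norm_nonneg _
  · have : ‖p - q‖ * ‖p - q‖ ≤ ‖z - z'‖ * ‖p - q‖ := by nlinarith
    exact le_of_mul_le_mul_right this h0

/-- Bound on the generalized gradient mapping
`G_λ(x̃) = (1/λ)(x̃ − prox_{λf}(x̃ − λ∇φˢ(x̃)))` near the fixed point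
`x̂ = prox_{λf}(x_ε − λ∇φˢ(x̂))` with `‖x_ε − x̂‖ ≤ λε/2`:
`(1/λ)‖x̃ − prox_{λf}(x̃ − λ∇φˢ(x̃))‖ ≤ (2/λ + L_xx + L_xy L_yx/μ_y)‖x̃ − x̂‖ + ε/2`. -/
theorem generalized_gradient_mapping_bound
    {E F : Type*} [NormedAddCommGroup E] [InnerProductSpace ℝ E] [FiniteDimensional ℝ E]
    [NormedAddCommGroup F] [InnerProductSpace ℝ F] [FiniteDimensional ℝ F]
    (f : E → ℝ) (hf : ConvexOn ℝ Set.univ f) (hflsc : LowerSemicontinuous f)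
    (lam ε : ℝ) (hlam : 0 < lam) (hε : 0 < ε)
    (Lxx Lxy Lyx μy : ℝ) (hLxx : 0 ≤ Lxx) (hLxy : 0 ≤ Lxy) (hLyx : 0 ≤ Lyx) (hμy : 0 < μy)
    (Φ : E → F → ℝ)
    (hdx : ∀ y : F, Differentiable ℝ (fun x => Φ x y))
    (hlipx : ∀ x x' : E, ∀ y y' : F,
      ‖gradient (fun z => Φ z y) x - gradient (fun z => Φ z y') x'‖ ≤
        Lxx * ‖x - x'‖ + Lxy * ‖y - y'‖)
    (ystar : E → F)
    (hystar : ∀ x x' : E, ‖ystar x - ystar x'‖ ≤ Lyx / μy * ‖x - x'‖)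
    (φs : E → ℝ) (hφs : Differentiable ℝ φs)
    (hgradφs : ∀ x : E, gradient φs x = gradient (fun z => Φ z (ystar x)) x)
    (proxf : E → E)
    (hprox : ∀ z : E, IsMinOn (fun w => f w + 1 / (2 * lam) * ‖w - z‖ ^ 2) Set.univ (proxf z))
    (xε xhat : E)
    (hfix : xhat = proxf (xε - lam • gradient φs xhat))
    (hclose : ‖xε - xhat‖ ≤ lam * ε / 2) :
    ∀ xtil : E,
      1 / lam * ‖xtil - proxf (xtil - lam • gradient φs xtil)‖ ≤
        (2 / lam + Lxx + Lxy * Lyx / μy) * ‖xtil - xhat‖ + ε / 2 := by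
  intro xtil
  set g : E → E := gradient φs with hg
  set P : E := proxf (xtil - lam • g xtil) with hP
  have hlipg : ‖g xhat - g xtil‖ ≤ (Lxx + Lxy * Lyx / μy) * ‖xhat - xtil‖ := by
    rw [hgradφs, hgradφs]
    have h1 := hlipx xhat xtil (ystar xhat) (ystar xtil)
    have h2 := hystar xhat xtil
    have h3 := mul_le_mul_of_nonneg_left h2 hLxy
    calc ‖gradient (fun z => Φ z (ystar xhat)) xhat - gradient (fun z => Φ z (ystar xtil)) xtil‖
        ≤ Lxx * ‖xhat - xtil‖ + Lxy * ‖ystar xhat - ystar xtil‖ := h1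
      _ ≤ Lxx * ‖xhat - xtil‖ + Lxy * (Lyx / μy * ‖xhat - xtil‖) := by linarith
      _ = (Lxx + Lxy * Lyx / μy) * ‖xhat - xtil‖ := by ring
  have hne : ‖xhat - P‖ ≤ ‖(xε - lam • g xhat) - (xtil - lam • g xtil)‖ := by
    conv_lhs => rw [hfix]
    exact prox_nonexpansive f hf lam hlam _ _ _ _ (hprox _) (hprox _)
  have hsplit : ‖(xε - lam • g xhat) - (xtil - lam • g xtil)‖ ≤
      ‖xε - xhat‖ + ‖xhat - xtil‖ + lam * ‖g xhat - g xtil‖ := by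
    have harr : (xε - lam • g xhat) - (xtil - lam • g xtil)
        = (xε - xhat) + (xhat - xtil) + (-(lam • (g xhat - g xtil))) := by
      rw [smul_sub]; abel
    rw [harr]
    calc ‖(xε - xhat) + (xhat - xtil) + (-(lam • (g xhat - g xtil)))‖
        ≤ ‖(xε - xhat) + (xhat - xtil)‖ + ‖-(lam • (g xhat - g xtil))‖ := norm_add_le _ _
      _ ≤ ‖xε - xhat‖ + ‖xhat - xtil‖ + ‖lam • (g xhat - g xtil)‖ := by
          rw [norm_neg]; linarith [norm_add_le (xε - xhat) (xhat - xtil)]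
      _ = ‖xε - xhat‖ + ‖xhat - xtil‖ + lam * ‖g xhat - g xtil‖ := by
          rw [norm_smul, Real.norm_eq_abs, abs_of_pos hlam]
  have htri : ‖xtil - P‖ ≤ ‖xtil - xhat‖ + ‖xhat - P‖ := by
    calc ‖xtil - P‖ = ‖(xtil - xhat) + (xhat - P)‖ := by rw [sub_add_sub_cancel]
      _ ≤ _ := norm_add_le _ _
  have hrev : ‖xhat - xtil‖ = ‖xtil - xhat‖ := norm_sub_rev _ _
  have hC : 0 ≤ Lxx + Lxy * Lyx / μy := by positivity
  have hmain : ‖xtil - P‖ ≤ 2 * ‖xtil - xhat‖ + lam * ε / 2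
      + lam * ((Lxx + Lxy * Lyx / μy) * ‖xtil - xhat‖) := by
    have := mul_le_mul_of_nonneg_left hlipg hlam.le
    rw [hrev] at hlipg
    nlinarith [htri, hne, hsplit, hclose, mul_le_mul_of_nonneg_left hlipg hlam.le]
  have hinv : 1 / lam * lam = 1 := by field_simp
  have h2l : 1 / lam * (2 * ‖xtil - xhat‖) = 2 / lam * ‖xtil - xhat‖ := by ring
  calc 1 / lam * ‖xtil - P‖
      ≤ 1 / lam * (2 * ‖xtil - xhat‖ + lam * ε / 2
          + lam * ((Lxx + Lxy * Lyx / μy) * ‖xtil - xhat‖)) := by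
        apply mul_le_mul_of_nonneg_left hmain (by positivity)
    _ = (2 / lam + Lxx + Lxy * Lyx / μy) * ‖xtil - xhat‖ + ε / 2 := by
        field_simp
        ring
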